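/- Let S be a finite set and b: 2^S → ℤ an integer-valued, monotone, submodular function with b(X) ≥ 0 for all nonempty X ⊆ S. Then the family I_b = { X ⊆ S : b(Y) ≥ |Y| for all nonempty Y ⊆ X } is the family of independent sets of a matroid on S. -/

import Mathlib

open Set

/-- Edmonds' theorem: a nonnegative (on nonempty sets), integer-valued, monotone,
submodular function induces a matroid whose independent sets are
`I_b = {X : b(Y) ≥ |Y| for all nonempty Y ⊆ X}`. -/
theorem edmonds_induced_matroid
    {S : Type} [Fintype S]
    (b : Set S → ℤ)
    (hmono : ∀ X Y : Set S, X ⊆ Y → b X ≤ b Y)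
    (hsub : ∀ X Y : Set S, b (X ∪ Y) + b (X ∩ Y) ≤ b X + b Y)
    (hnonneg : ∀ X : Set S, X.Nonempty → 0 ≤ b X) :
    (∀ Y : Set (Set S), Y = {X : Set S | ∀ Z ⊆ X, Z.Nonempty → (Z.ncard : ℤ) ≤ b Z} →
      ((∅ : Set S) ∈ Y ∧
       (∀ X X' : Set S, X ⊆ X' → X' ∈ Y → X ∈ Y) ∧
       (∀ X ∈ Y, ∀ X' ∈ Y, X.ncard < X'.ncard →
          ∃ y ∈ X' \ X, insert y X ∈ Y))) := by
  intro Y hY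
  subst hY
  refine ⟨?_, ?_, ?_⟩
  · intro Z hZ hne
    rcases hne with ⟨x, hx⟩
    exact absurd (hZ hx) (notMem_empty x)
  · intro X X' hXX' hX' Z hZ hne
    exact hX' Z (hZ.trans hXX') hne
  · intro X hX X' hX' hcard
    simp only [mem_setOf_eq] at hX hX'
    by_contra hcon
    push_neg at hcon
    -- notation
    have hXfin : ∀ s : Set S, s.Finite := fun s => toFinite s
    -- y ∈ X' \ X facts
    have hyX : ∀ y ∈ X' \ X, y ∉ X := fun y hy => hy.2
    have hyX' : ∀ y ∈ X' \ X, y ∈ X' := fun y hy => hy.1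
    -- witness predicate
    let Wit : S → Set S → Prop := fun y A => A ⊆ X ∧ A.Nonempty ∧ b (insert y A) ≤ (A.ncard : ℤ)
    -- every y ∈ X' \ X has a witness
    have hwit : ∀ y ∈ X' \ X, ∃ A, Wit y A := by
      intro y hy
      have h1 : ¬ (∀ Z ⊆ insert y X, Z.Nonempty → ((Z.ncard : ℤ) ≤ b Z)) := by
        have := hcon y hy
        simpa [mem_setOf_eq] using this
      push_neg at h1
      obtain ⟨Z, hZsub, hZne, hZb⟩ := h1
      have hyZ : y ∈ Z := by
        by_contra hyZ
        have hZX : Z ⊆ X := by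
          intro x hx
          rcases hZsub hx with h | h
          · exact absurd (h ▸ hx) hyZ
          · exact h
        exact absurd (hX Z hZX hZne) (not_le.mpr hZb)
      refine ⟨Z \ {y}, ?_, ?_, ?_⟩
      · intro x hx
        rcases hZsub hx.1 with h | h
        · exact absurd h hx.2
        · exact h
      · by_contra hne2
        rw [not_nonempty_iff_eq_empty, diff_eq_empty] at hne2
        have hZy : Z = {y} := subset_antisymm hne2 (singleton_subset_iff.mpr hyZ)
        have h2 : (1 : ℤ) ≤ b {y} := by
          have := hX' {y} (singleton_subset_iff.mpr (hyX' y hy)) ⟨y, rfl⟩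
          simpa using this
        rw [hZy] at hZb
        simp at hZb
        omega
      · have hins : insert y (Z \ {y}) = Z := by
          ext x
          simp only [mem_insert_iff, mem_diff, mem_singleton_iff]
          constructor
          · rintro (rfl | ⟨h, _⟩) <;> [exact hyZ; exact h]
          · intro h
            by_cases hxy : x = y
            · exact Or.inl hxy
            · exact Or.inr ⟨h, hxy⟩
        have hnc : Z.ncard = (Z \ {y}).ncard + 1 := by
          conv_lhs => rw [← hins]
          exact Set.ncard_insert_of_notMem (by simp) (hXfin _)
        rw [hins]
        rw [hnc] at hZb
        push_cast at hZb ⊢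
        omega
    -- basic: subsets of X and X' have b ≥ ncard
    have hXcard : ∀ A : Set S, A ⊆ X → A.Nonempty → (A.ncard : ℤ) ≤ b A := fun A h hne => hX A h hne
    -- witnesses are closed under union
    have hunion : ∀ y ∈ X' \ X, ∀ A B : Set S, Wit y A → Wit y B → Wit y (A ∪ B) := by
      intro y hy A B ⟨hA1, hA2, hA3⟩ ⟨hB1, hB2, hB3⟩
      refine ⟨union_subset hA1 hB1, hA2.mono subset_union_left, ?_⟩
      have hu : insert y A ∪ insert y B = insert y (A ∪ B) := by
        ext x; simp [mem_insert_iff]; tauto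
      have hi : insert y A ∩ insert y B = insert y (A ∩ B) := by
        ext x; simp [mem_insert_iff]; tauto
      have h1 := hsub (insert y A) (insert y B)
      rw [hu, hi] at h1
      have h2 : ((A ∩ B).ncard : ℤ) ≤ b (insert y (A ∩ B)) := by
        rcases (A ∩ B).eq_empty_or_nonempty with he | hne
        · rw [he]
          simpa using hnonneg {y} ⟨y, rfl⟩
        · calc ((A ∩ B).ncard : ℤ) ≤ b (A ∩ B) :=
                hXcard _ (fun x hx => hA1 hx.1) hne
            _ ≤ b (insert y (A ∩ B)) := hmono _ _ (subset_insert _ _)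
      have h3 : (A ∪ B).ncard + (A ∩ B).ncard = A.ncard + B.ncard :=
        Set.ncard_union_add_ncard_inter A B (hXfin A) (hXfin B)
      have h3' : ((A ∪ B).ncard : ℤ) + (A ∩ B).ncard = A.ncard + B.ncard := by
        exact_mod_cast congrArg (Nat.cast : ℕ → ℤ) h3
      linarith
    -- maximal witnesses
    have hmax : ∀ y : S, ∃ M : Set S, y ∈ X' \ X → (Wit y M ∧ ∀ A, Wit y A → A ⊆ M) := by
      intro y
      by_cases hy : y ∈ X' \ X
      · obtain ⟨M, hM, hMmax⟩ :=
          Set.Finite.exists_maximalFor Set.ncard {A | Wit y A} (toFinite _) (hwit y hy)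
        refine ⟨M, fun _ => ⟨hM, fun A hA => ?_⟩⟩
        have hAM : Wit y (A ∪ M) := hunion y hy A M hA hM
        have h1 : M.ncard ≤ (A ∪ M).ncard := Set.ncard_le_ncard subset_union_right (hXfin _)
        have h2 : M.ncard = (A ∪ M).ncard := le_antisymm h1 (hMmax hAM h1)
        have h3 : A ∪ M = M := (Set.eq_of_subset_of_ncard_le subset_union_right h2.ge (hXfin _)).symm
        exact h3 ▸ subset_union_left
      · exact ⟨∅, fun h => absurd h hy⟩
    choose M hM using hmax
    have hMwit : ∀ y ∈ X' \ X, Wit y (M y) := fun y hy => (hM y hy).1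
    have hMmax : ∀ y ∈ X' \ X, ∀ A, Wit y A → A ⊆ M y := fun y hy => (hM y hy).2
    have hMsub : ∀ y ∈ X' \ X, M y ⊆ X := fun y hy => (hMwit y hy).1
    have hMne : ∀ y ∈ X' \ X, (M y).Nonempty := fun y hy => (hMwit y hy).2.1
    have hMb : ∀ y ∈ X' \ X, b (insert y (M y)) ≤ ((M y).ncard : ℤ) := fun y hy => (hMwit y hy).2.2
    have hMtight : ∀ y ∈ X' \ X, b (M y) = ((M y).ncard : ℤ) := by
      intro y hy
      have h1 : b (M y) ≤ b (insert y (M y)) := hmono _ _ (subset_insert _ _)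
      have h2 := hXcard (M y) (hMsub y hy) (hMne y hy)
      have h3 := hMb y hy
      omega
    -- M y is not contained in X'
    have hMdiff : ∀ y ∈ X' \ X, (M y \ X').Nonempty := by
      intro y hy
      by_contra hne2
      rw [not_nonempty_iff_eq_empty, diff_eq_empty] at hne2
      have hsub' : insert y (M y) ⊆ X' := insert_subset (hyX' y hy) hne2
      have h1 := hX' _ hsub' ⟨y, mem_insert y _⟩
      have h2 : (insert y (M y)).ncard = (M y).ncard + 1 :=
        Set.ncard_insert_of_notMem (fun h => hyX y hy (hMsub y hy h)) (hXfin _)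
      rw [h2] at h1
      have h3 := hMb y hy
      push_cast at h1
      omega
    -- dichotomy: maximal witness sets are equal or disjoint
    have hdichaux : ∀ y ∈ X' \ X, ∀ y' ∈ X' \ X, (M y ∩ M y').Nonempty → M y' ⊆ M y := by
      intro y hy y' hy' hne2
      have hw : Wit y (M y ∪ M y') := by
        refine ⟨union_subset (hMsub y hy) (hMsub y' hy'), (hMne y hy).mono subset_union_left, ?_⟩
        have hu : insert y (M y) ∪ M y' = insert y (M y ∪ M y') := by
          ext x; simp [mem_insert_iff]; tauto
        have hyMy' : y ∉ M y' := fun h => hyX y hy (hMsub y' hy' h)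
        have hi : insert y (M y) ∩ M y' = M y ∩ M y' := by
          ext x
          simp only [mem_inter_iff, mem_insert_iff]
          constructor
          · rintro ⟨rfl | h, h2⟩
            · exact absurd h2 hyMy'
            · exact ⟨h, h2⟩
          · rintro ⟨h1, h2⟩; exact ⟨Or.inr h1, h2⟩
        have h1 := hsub (insert y (M y)) (M y')
        rw [hu, hi] at h1
        have h2 : ((M y ∩ M y').ncard : ℤ) ≤ b (M y ∩ M y') :=
          hXcard _ (fun x hx => hMsub y hy hx.1) hne2
        have h3 : (M y ∪ M y').ncard + (M y ∩ M y').ncard = (M y).ncard + (M y').ncard :=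
          Set.ncard_union_add_ncard_inter _ _ (hXfin _) (hXfin _)
        have h3' : ((M y ∪ M y').ncard : ℤ) + ((M y ∩ M y').ncard : ℤ)
            = ((M y).ncard : ℤ) + ((M y').ncard : ℤ) := by exact_mod_cast congrArg (Nat.cast : ℕ → ℤ) h3
        have h4 := hMb y hy
        have h5 := hMtight y' hy'
        linarith
      have := hMmax y hy _ hw
      exact subset_union_right.trans this
    have hdich : ∀ y ∈ X' \ X, ∀ y' ∈ X' \ X, M y ≠ M y' → M y ∩ M y' = ∅ := by
      intro y hy y' hy' hne2
      by_contra h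
      rw [← ne_eq, ← nonempty_iff_ne_empty] at h
      exact hne2 (subset_antisymm
        (hdichaux y' hy' y hy (by rwa [inter_comm] at h)) (hdichaux y hy y' hy' h))
    -- class bound, part 1: b (M y ∪ K) ≤ |M y| for a class K
    have hclass1 : ∀ y ∈ X' \ X, ∀ K : Set S,
        K ⊆ X' \ X → (∀ z ∈ K, M z = M y) → b (M y ∪ K) ≤ ((M y).ncard : ℤ) := by
      intro y hy K
      refine Set.Finite.induction_on (motive := fun K _ => K ⊆ X' \ X → (∀ z ∈ K, M z = M y) → b (M y ∪ K) ≤ ((M y).ncard : ℤ)) K (toFinite K) ?_ ?_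
      · intro _ _
        rw [union_empty]
        exact (hMtight y hy).le
      · intro z K' hzK' _ ih hsub1 hall
        have hzT : z ∈ X' \ X := hsub1 (mem_insert z K')
        have hK'T : K' ⊆ X' \ X := (subset_insert z K').trans hsub1
        have hK'eq : ∀ w ∈ K', M w = M y := fun w hw => hall w (mem_insert_of_mem z hw)
        have ihv := ih hK'T hK'eq
        have hzMy : z ∉ M y := fun h => hyX z hzT (hMsub y hy h)
        have hzK'2 : z ∉ M y ∪ K' := by
          rintro (h | h) <;> [exact hzMy h; exact hzK' h]
        have hu : (M y ∪ K') ∪ insert z (M y) = M y ∪ insert z K' := by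
          ext x; simp [mem_insert_iff]; tauto
        have hi : (M y ∪ K') ∩ insert z (M y) = M y := by
          ext x
          simp only [mem_inter_iff, mem_union, mem_insert_iff]
          constructor
          · rintro ⟨h1 | h1, rfl | h2⟩
            · exact absurd h1 hzMy
            · exact h2
            · exact absurd h1 hzK'
            · exact h2
          · intro h; exact ⟨Or.inl h, Or.inr h⟩
        have h1 := hsub (M y ∪ K') (insert z (M y))
        rw [hu, hi] at h1
        have h2 : b (insert z (M y)) ≤ ((M y).ncard : ℤ) := by
          have := hMb z hzT
          rwa [hall z (mem_insert z K')] at this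
        have h3 := hMtight y hy
        linarith
    -- class bound, part 2: |K| ≤ |M y \ X'|
    have hclass2 : ∀ y ∈ X' \ X, ∀ K : Set S, K ⊆ X' \ X → y ∈ K →
        (∀ z ∈ K, M z = M y) → K.ncard ≤ (M y \ X').ncard := by
      intro y hy K hKT hyK hall
      have h1 := hsub (M y ∪ K) X'
      have h2 : b X' ≤ b ((M y ∪ K) ∪ X') := hmono _ _ subset_union_right
      have h3 : b ((M y ∪ K) ∩ X') ≤ b (M y ∪ K) := by linarith
      have h4 := hclass1 y hy K hKT hall
      have hKX' : K ⊆ X' := fun z hz => hyX' z (hKT hz)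
      have hi : (M y ∪ K) ∩ X' = (M y ∩ X') ∪ K := by
        ext x
        simp only [mem_inter_iff, mem_union]
        constructor
        · rintro ⟨h1' | h1', h2'⟩
          · exact Or.inl ⟨h1', h2'⟩
          · exact Or.inr h1'
        · rintro (⟨ha, hb2⟩ | ha)
          · exact ⟨Or.inl ha, hb2⟩
          · exact ⟨Or.inr ha, hKX' ha⟩
      have hne2 : ((M y ∩ X') ∪ K).Nonempty := ⟨y, Or.inr hyK⟩
      have hsubX' : (M y ∩ X') ∪ K ⊆ X' := union_subset (fun x hx => hx.2) hKX'
      have h5 := hX' _ hsubX' hne2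
      have hdisj : Disjoint (M y ∩ X') K := by
        rw [disjoint_left]
        rintro a ⟨ha1, _⟩ ha3
        exact hyX a (hKT ha3) (hMsub y hy ha1)
      have h6 : ((M y ∩ X') ∪ K).ncard = (M y ∩ X').ncard + K.ncard :=
        Set.ncard_union_eq hdisj (hXfin _) (hXfin _)
      have h7 : (M y ∩ X').ncard + (M y \ X').ncard = (M y).ncard :=
        Set.ncard_inter_add_ncard_diff_eq_ncard (M y) X' (hXfin _)
      rw [hi] at h3
      rw [h6] at h5
      have : ((M y ∩ X').ncard : ℤ) + K.ncard ≤ (M y).ncard := by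
        push_cast at h5 ⊢
        linarith
      omega
    -- counting over classes
    have hcount : ∀ n : ℕ, ∀ T' : Set S, T' ⊆ X' \ X → T'.ncard ≤ n →
        T'.ncard ≤ (⋃ y ∈ T', (M y \ X')).ncard := by
      intro n
      induction n with
      | zero =>
        intro T' _ h0
        omega
      | succ n ih =>
        intro T' hT' hle
        rcases T'.eq_empty_or_nonempty with rfl | ⟨y0, hy0⟩
        · simp
        · have hy0T : y0 ∈ X' \ X := hT' hy0
          set K : Set S := {z ∈ T' | M z = M y0} with hK
          have hKsub : K ⊆ T' := fun z hz => hz.1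
          have hy0K : y0 ∈ K := ⟨hy0, rfl⟩
          have hKT : K ⊆ X' \ X := hKsub.trans hT'
          set T'' : Set S := T' \ K with hT''
          have hT''sub : T'' ⊆ X' \ X := (diff_subset).trans hT'
          have hT''lt : T''.ncard < T'.ncard := by
            refine Set.ncard_lt_ncard ?_ (hXfin _)
            refine ssubset_of_subset_of_ne diff_subset (fun he => ?_)
            have : y0 ∈ T'' := he ▸ hy0
            exact this.2 hy0K
          have ihv := ih T'' hT''sub (by omega)
          have hKbound : K.ncard ≤ (M y0 \ X').ncard :=
            hclass2 y0 hy0T K hKT hy0K (fun z hz => hz.2)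
          have hsplit : T''.ncard + K.ncard = T'.ncard := by
            have : T'.ncard = T''.ncard + K.ncard := by
              rw [hT'']
              exact (Set.ncard_diff_add_ncard_of_subset hKsub (hXfin _)).symm
            omega
          -- disjointness of M y0 \ X' from the union over T''
          have hdisj : Disjoint (M y0 \ X') (⋃ z ∈ T'', (M z \ X')) := by
            rw [disjoint_left]
            rintro a ⟨ha1, _⟩ ha2
            simp only [mem_iUnion] at ha2
            obtain ⟨z, hz, hza⟩ := ha2
            have hzT : z ∈ X' \ X := hT''sub hz
            have hzne : M z ≠ M y0 := fun he => hz.2 ⟨hz.1, he⟩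
            have := hdich z hzT y0 hy0T hzne
            exact absurd (mem_inter hza.1 ha1) (by rw [this]; exact notMem_empty a)
          have hsub2 : (M y0 \ X') ∪ (⋃ z ∈ T'', (M z \ X')) ⊆ ⋃ y ∈ T', (M y \ X') := by
            apply union_subset
            · exact subset_biUnion_of_mem (u := fun y => M y \ X') hy0
            · exact iUnion₂_mono' (fun z hz => ⟨z, hz.1, subset_rfl⟩)
          have h8 : ((M y0 \ X') ∪ ⋃ z ∈ T'', (M z \ X')).ncard
              = (M y0 \ X').ncard + (⋃ z ∈ T'', (M z \ X')).ncard :=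
            Set.ncard_union_eq hdisj (hXfin _) (hXfin _)
          have h9 := Set.ncard_le_ncard hsub2 (hXfin _)
          omega
    -- conclude
    have hfinal := hcount (X' \ X).ncard (X' \ X) subset_rfl le_rfl
    have hUsub : (⋃ y ∈ X' \ X, (M y \ X')) ⊆ X \ X' := by
      refine iUnion₂_subset (fun y hy => ?_)
      exact fun x hx => ⟨hMsub y hy hx.1, hx.2⟩
    have h10 := Set.ncard_le_ncard hUsub (hXfin _)
    have h11 : (X' \ X).ncard ≤ (X \ X').ncard := le_trans hfinal h10
    have h12 : (X ∩ X').ncard + (X \ X').ncard = X.ncard :=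
      Set.ncard_inter_add_ncard_diff_eq_ncard X X' (hXfin _)
    have h13 : (X' ∩ X).ncard + (X' \ X).ncard = X'.ncard :=
      Set.ncard_inter_add_ncard_diff_eq_ncard X' X (hXfin _)
    rw [inter_comm] at h13
    omega
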